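/- arXiv:2603.17750 — 2 statements merged into one kernel-verified Lean document; each statement's English description precedes it below -/
import Mathlib

section
/- Let E, Ẽ, F be standard Borel spaces. Let X ∼ μ on E, let X̃ be generated from X by a Markov kernel R : E → Ẽ, and let X_t be generated from X by a Markov kernel P : E → F, with X_t and X̃ conditionally independent given X. Let π(·|x̃) be a regular conditional distribution of X given X̃ = x̃, and define the posterior-predictive kernel P̄ : Ẽ → F by P̄(x̃) = ∫ P(x) dπ(x|x̃). Then for every Markov kernel Q : Ẽ → F, E[KL(P(X) ‖ Q(X̃))] = E[KL(P(X) ‖ P̄(X̃))] + E[KL(P̄(X̃) ‖ Q(X̃))], where expectations are over the joint law of (X, X̃); consequently the infimum over Q of E[KL(P(X) ‖ Q(X̃))] equals E[KL(P(X) ‖ P̄(X̃))] and is attained at Q = P̄. -/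
open MeasureTheory ProbabilityTheory
open scoped ENNReal

open Classical in
/-- Kullback–Leibler divergence `KL(ν ‖ ρ) ∈ [0, ∞]`: equal to `∫ log (dν/dρ) dν` when
`ν ≪ ρ` and this integral exists, and `+∞` otherwise. -/
noncomputable def klDiv {α : Type*} [MeasurableSpace α] (ν ρ : Measure α) : ℝ≥0∞ :=
  if ν ≪ ρ ∧ Integrable (llr ν ρ) ν
  then ENNReal.ofReal (∫ x, llr ν ρ x ∂ν)
  else ⊤

lemma klDiv_self {α : Type*} [MeasurableSpace α] (ν : Measure α) [SigmaFinite ν] :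
    klDiv ν ν = 0 := by
  have h0 : llr ν ν =ᵐ[ν] 0 := by
    filter_upwards [Measure.rnDeriv_self ν] with x hx
    simp [llr, hx]
  have hint : Integrable (llr ν ν) ν := by
    refine (integrable_congr h0).mpr (integrable_zero _ _ _)
  rw [klDiv, if_pos ⟨Measure.AbsolutelyContinuous.refl ν, hint⟩]
  rw [integral_congr_ae h0]
  simp

lemma klDiv_eq_top_of_not {α : Type*} [MeasurableSpace α] {ν ρ : Measure α}
    (h : ¬ (ν ≪ ρ ∧ Integrable (llr ν ρ) ν)) : klDiv ν ρ = ⊤ := by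
  rw [klDiv, if_neg h]

lemma klDiv_of_ac {α : Type*} [MeasurableSpace α] {ν ρ : Measure α}
    (h1 : ν ≪ ρ) (h2 : Integrable (llr ν ρ) ν) :
    klDiv ν ρ = ENNReal.ofReal (∫ x, llr ν ρ x ∂ν) := by
  rw [klDiv, if_pos ⟨h1, h2⟩]

/-- (L1) the negative part of the llr has `∫⁻` at most `ρ univ`. -/
lemma lintegral_ofReal_neg_llr_le {α : Type*} [MeasurableSpace α] {ν ρ : Measure α}
    [IsFiniteMeasure ν] [IsFiniteMeasure ρ] (hν : ν ≪ ρ) :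
    ∫⁻ x, ENNReal.ofReal (- llr ν ρ x) ∂ν ≤ ρ Set.univ := by
  set r := ν.rnDeriv ρ with hr
  have hmr : Measurable r := Measure.measurable_rnDeriv _ _
  have hmf : Measurable fun x => ENNReal.ofReal (- llr ν ρ x) :=
    (measurable_llr _ _).neg.ennreal_ofReal
  calc ∫⁻ x, ENNReal.ofReal (- llr ν ρ x) ∂ν
      = ∫⁻ x, ENNReal.ofReal (- llr ν ρ x) ∂(ρ.withDensity r) := by
        rw [Measure.withDensity_rnDeriv_eq _ _ hν]
    _ = ∫⁻ x, (r * fun x => ENNReal.ofReal (- llr ν ρ x)) x ∂ρ :=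
        lintegral_withDensity_eq_lintegral_mul ρ hmr hmf
    _ ≤ ∫⁻ _, 1 ∂ρ := by
        refine lintegral_mono fun x => ?_
        simp only [Pi.mul_apply]
        rcases eq_or_ne (r x) ∞ with h | h
        · have : llr ν ρ x = 0 := by simp [llr, hr ▸ h]
          simp [this]
        rcases le_or_gt (r x).toReal 0 with ht | ht
        · have : (r x).toReal = 0 := le_antisymm ht ENNReal.toReal_nonneg
          simp [llr, ← hr, this]
        · have hlog : - Real.log ((r x).toReal) ≤ (r x).toReal⁻¹ - 1 := by
            have h1 := Real.log_le_sub_one_of_pos (inv_pos.mpr ht)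
            rwa [Real.log_inv] at h1
          calc r x * ENNReal.ofReal (- llr ν ρ x)
              ≤ r x * ENNReal.ofReal ((r x).toReal⁻¹) := by
                refine mul_le_mul_right (ENNReal.ofReal_le_ofReal ?_) _
                calc - llr ν ρ x = - Real.log ((r x).toReal) := rfl
                  _ ≤ (r x).toReal⁻¹ - 1 := hlog
                  _ ≤ (r x).toReal⁻¹ := by linarith
            _ = ENNReal.ofReal ((r x).toReal) * ENNReal.ofReal ((r x).toReal⁻¹) := by
                rw [ENNReal.ofReal_toReal h]
            _ = ENNReal.ofReal ((r x).toReal * (r x).toReal⁻¹) := by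
                rw [ENNReal.ofReal_mul ENNReal.toReal_nonneg]
            _ ≤ 1 := by
                rw [mul_inv_cancel₀ ht.ne']
                simp
    _ = ρ Set.univ := by simp
section aux
variable {α : Type*} [MeasurableSpace α] {ν ρ ν' : Measure α}

/-- (L2) nonnegativity of `∫ llr` for probability measures. -/
lemma integral_llr_nonneg' [IsProbabilityMeasure ν] [IsProbabilityMeasure ρ]
    (hν : ν ≪ ρ) (hint : Integrable (llr ν ρ) ν) :
    0 ≤ ∫ x, llr ν ρ x ∂ν := by
  set h := fun x => Real.exp (- llr ν ρ x) with hh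
  have hmh : Measurable h := ((measurable_llr _ _).neg).exp
  have hbound : ∫⁻ x, ENNReal.ofReal (h x) ∂ν ≤ 1 := by
    have hae : (fun x => ENNReal.ofReal (h x))
        =ᵐ[ν] fun x => ENNReal.ofReal ((ρ.rnDeriv ν x).toReal) := by
      filter_upwards [exp_neg_llr hν] with x hx
      rw [hh]; simp only; rw [hx]
    rw [lintegral_congr_ae hae]
    calc ∫⁻ x, ENNReal.ofReal ((ρ.rnDeriv ν x).toReal) ∂ν
        ≤ ∫⁻ x, ρ.rnDeriv ν x ∂ν := lintegral_mono fun x => ENNReal.ofReal_toReal_le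
      _ ≤ ρ Set.univ := Measure.lintegral_rnDeriv_le
      _ = 1 := measure_univ
  have hpos : ∀ x, 0 ≤ h x := fun x => (Real.exp_pos _).le
  have hinth : Integrable h ν := by
    refine ⟨hmh.aestronglyMeasurable, ?_⟩
    rw [hasFiniteIntegral_iff_norm]
    refine lt_of_le_of_lt ?_ (lt_of_le_of_lt hbound ENNReal.one_lt_top)
    refine lintegral_mono fun x => le_of_eq ?_
    rw [Real.norm_eq_abs, abs_of_nonneg (hpos x)]
  have hinteg : ∫ x, h x ∂ν ≤ 1 := by
    rw [integral_eq_lintegral_of_nonneg_ae (Filter.Eventually.of_forall hpos)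
      hmh.aestronglyMeasurable]
    calc (∫⁻ x, ENNReal.ofReal (h x) ∂ν).toReal ≤ (1 : ℝ≥0∞).toReal := by
          refine ENNReal.toReal_mono (by simp) hbound
      _ = 1 := by simp
  have hmono : ∫ x, (- llr ν ρ x + 1) ∂ν ≤ ∫ x, h x ∂ν := by
    refine integral_mono (hint.neg.add (integrable_const 1)) hinth fun x => ?_
    exact Real.add_one_le_exp _
  have h6 : ∫ x, (- llr ν ρ x) ∂ν + ∫ _x, (1:ℝ) ∂ν ≤ 1 := by
    have hadd := integral_add hint.neg (integrable_const (1:ℝ)) (μ := ν)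
    simp only [Pi.neg_apply] at hadd
    rw [← hadd]
    exact le_trans hmono hinteg
  rw [integral_neg, integral_const] at h6
  simp only [probReal_univ, smul_eq_mul, one_mul] at h6
  linarith

/-- (L3) absolute continuity wrt an intermediate measure. -/
lemma ac_of_ac_of_rnDeriv_pos [SigmaFinite ν'] [IsFiniteMeasure ρ]
    (hν : ν ≪ ρ) (hν' : ν' ≪ ρ) (hD : ν {y | ν'.rnDeriv ρ y = 0} = 0) :
    ν ≪ ν' := by
  set w := ν'.rnDeriv ρ with hw
  have hmw : Measurable w := Measure.measurable_rnDeriv _ _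
  refine Measure.AbsolutelyContinuous.mk fun S hS hS0 => ?_
  have h1 : ∫⁻ y in S, w y ∂ρ = 0 := by
    rw [Measure.setLIntegral_rnDeriv hν' S, hS0]
  have h2 : ∀ᵐ y ∂ρ, y ∈ S → w y = 0 := (setLIntegral_eq_zero_iff hS hmw).mp h1
  have h3 : ρ (S ∩ {y | w y ≠ 0}) = 0 := by
    have h2' := ae_iff.mp h2
    refine measure_mono_null (fun y hy => ?_) h2'
    simp only [Set.mem_setOf_eq, Classical.not_imp]
    exact ⟨hy.1, hy.2⟩
  have h4 : ν (S ∩ {y | w y ≠ 0}) = 0 := hν h3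
  have h5 : ν (S ∩ {y | w y = 0}) = 0 :=
    measure_mono_null (Set.inter_subset_right) hD
  have : S ⊆ (S ∩ {y | w y ≠ 0}) ∪ (S ∩ {y | w y = 0}) := by
    intro y hy
    by_cases h : w y = 0
    · exact Or.inr ⟨hy, h⟩
    · exact Or.inl ⟨hy, h⟩
  exact measure_mono_null this (measure_union_null h4 h5)

/-- (L4) chain rule for llr. -/
lemma llr_chain [SigmaFinite ν] [SigmaFinite ν'] [SigmaFinite ρ]
    (hν : ν ≪ ν') (hν' : ν' ≪ ρ) :
    llr ν ρ =ᵐ[ν] fun x => llr ν ν' x + llr ν' ρ x := by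
  have hνρ : ν ≪ ρ := hν.trans hν'
  have hmul : ν.rnDeriv ν' * ν'.rnDeriv ρ =ᵐ[ρ] ν.rnDeriv ρ :=
    Measure.rnDeriv_mul_rnDeriv hν
  have h1 : ∀ᵐ x ∂ν, 0 < ν.rnDeriv ν' x := Measure.rnDeriv_pos hν
  have h2 : ∀ᵐ x ∂ν, ν.rnDeriv ν' x < ∞ := hν.ae_le (Measure.rnDeriv_lt_top ν ν')
  have h3 : ∀ᵐ x ∂ν, 0 < ν'.rnDeriv ρ x := hν.ae_le (Measure.rnDeriv_pos hν')
  have h4 : ∀ᵐ x ∂ν, ν'.rnDeriv ρ x < ∞ := hνρ.ae_le (Measure.rnDeriv_lt_top ν' ρ)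
  have h5 : ∀ᵐ x ∂ν, ν.rnDeriv ν' x * ν'.rnDeriv ρ x = ν.rnDeriv ρ x := hνρ.ae_le hmul
  filter_upwards [h1, h2, h3, h4, h5] with x hx1 hx2 hx3 hx4 hx5
  have ha : (ν.rnDeriv ν' x).toReal ≠ 0 :=
    (ENNReal.toReal_pos hx1.ne' hx2.ne).ne'
  have hb : (ν'.rnDeriv ρ x).toReal ≠ 0 :=
    (ENNReal.toReal_pos hx3.ne' hx4.ne).ne'
  calc llr ν ρ x = Real.log ((ν.rnDeriv ρ x).toReal) := rfl
    _ = Real.log ((ν.rnDeriv ν' x * ν'.rnDeriv ρ x).toReal) := by rw [hx5]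
    _ = Real.log ((ν.rnDeriv ν' x).toReal * (ν'.rnDeriv ρ x).toReal) := by
        rw [ENNReal.toReal_mul]
    _ = llr ν ν' x + llr ν' ρ x := Real.log_mul ha hb

end aux
lemma measurable_klDiv {α F : Type*} [MeasurableSpace α] [MeasurableSpace F]
    [MeasurableSpace.CountableOrCountablyGenerated α F]
    (κ η : Kernel α F) [IsFiniteKernel κ] [IsFiniteKernel η] :
    Measurable fun a => klDiv (κ a) (η a) := by
  classical
  set G : α → F → ℝ := fun a y => Real.log (κ.rnDeriv η a y).toReal with hGdef
  have hGm : Measurable (Function.uncurry G) :=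
    Real.measurable_log.comp (Kernel.measurable_rnDeriv κ η).ennreal_toReal
  have hG : StronglyMeasurable (Function.uncurry G) := hGm.stronglyMeasurable
  set S1 := {a | κ a ≪ η a} with hS1def
  have hS1 : MeasurableSet S1 := Kernel.measurableSet_absolutelyContinuous κ η
  set S2 := {a | Integrable (G a) (κ a)} with hS2def
  have hS2 : MeasurableSet S2 := measurableSet_kernel_integrable hG
  have hint : Measurable fun a => ∫ y, G a y ∂κ a :=
    (StronglyMeasurable.integral_kernel_prod_right hG).measurable
  have hcongr : ∀ a ∈ S1, llr (κ a) (η a) =ᵐ[κ a] G a := by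
    intro a ha
    have h := Kernel.rnDeriv_eq_rnDeriv_measure (κ := κ) (η := η) (a := a)
    filter_upwards [ha.ae_le h] with y hy
    rw [llr_def]
    simp only [hGdef, hy]
  have heq : (fun a => klDiv (κ a) (η a)) = fun a =>
      if a ∈ S1 ∩ S2 then ENNReal.ofReal (∫ y, G a y ∂κ a) else ⊤ := by
    funext a
    by_cases h1 : a ∈ S1
    · have hc := hcongr a h1
      by_cases h2 : a ∈ S2
      · rw [if_pos ⟨h1, h2⟩, klDiv_of_ac h1 ((integrable_congr hc).mpr h2),
          integral_congr_ae hc]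
      · rw [if_neg (fun h => h2 h.2), klDiv_eq_top_of_not]
        rintro ⟨-, hi⟩
        exact h2 ((integrable_congr hc).mp hi)
    · rw [if_neg (fun h => h1 h.1), klDiv_eq_top_of_not (fun h => h1 h.1)]
  rw [heq]
  exact Measurable.ite (hS1.inter hS2) hint.ennreal_ofReal measurable_const

lemma isProbabilityMeasure_bind {E F : Type*} [MeasurableSpace E] [MeasurableSpace F]
    (m : Measure E) [IsProbabilityMeasure m] (P : Kernel E F) [IsMarkovKernel P] :
    IsProbabilityMeasure (m.bind ⇑P) := by
  constructor
  rw [Measure.bind_apply MeasurableSet.univ P.measurable.aemeasurable]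
  simp

lemma lintegral_ofReal_eq_ofReal_integral_max {α : Type*} [MeasurableSpace α]
    {ν : Measure α} {h : α → ℝ} (hint : Integrable h ν) :
    ∫⁻ x, ENNReal.ofReal (h x) ∂ν = ENNReal.ofReal (∫ x, max (h x) 0 ∂ν) := by
  have hpt : ∀ x, ENNReal.ofReal (h x) = ENNReal.ofReal (max (h x) 0) := by
    intro x
    rcases le_total 0 (h x) with hx | hx
    · rw [max_eq_left hx]
    · rw [max_eq_right hx, ENNReal.ofReal_of_nonpos hx, ENNReal.ofReal_zero]
  simp_rw [hpt]
  rw [ofReal_integral_eq_lintegral_ofReal]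
  · exact hint.pos_part
  · exact Filter.Eventually.of_forall fun x => le_max_right _ _

section comp
variable {E F : Type*} [MeasurableSpace E] [MeasurableSpace F]
  [MeasurableSpace.CountableOrCountablyGenerated E F]

lemma lintegral_klDiv_eq_add (m : Measure E) [IsProbabilityMeasure m]
    (P : Kernel E F) [IsMarkovKernel P] (ρ : Measure F) [IsProbabilityMeasure ρ] :
    ∫⁻ x, klDiv (P x) ρ ∂m
      = ∫⁻ x, klDiv (P x) (m.bind ⇑P) ∂m + klDiv (m.bind ⇑P) ρ := by
  classical
  set nb := m.bind ⇑P with hnb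
  haveI : IsProbabilityMeasure nb := isProbabilityMeasure_bind m P
  set g := llr nb ρ with hgdef
  have hgm : Measurable g := measurable_llr _ _
  -- measurability of the various integrands
  have mA : Measurable fun x => klDiv (P x) ρ := by
    simpa using measurable_klDiv P (Kernel.const E ρ)
  have mB : Measurable fun x => klDiv (P x) nb := by
    simpa using measurable_klDiv P (Kernel.const E nb)
  have mqp : Measurable fun x => ∫⁻ y, ENNReal.ofReal (g y) ∂P x :=
    Measurable.lintegral_kernel_prod_right'
      (f := fun p : E × F => ENNReal.ofReal (g p.2))
      ((hgm.comp measurable_snd).ennreal_ofReal)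
  have mqn : Measurable fun x => ∫⁻ y, ENNReal.ofReal (- g y) ∂P x :=
    Measurable.lintegral_kernel_prod_right'
      (f := fun p : E × F => ENNReal.ofReal (- g p.2))
      (((hgm.comp measurable_snd).neg).ennreal_ofReal)
  have mqabs : Measurable fun x => ∫⁻ y, ‖g y‖₊ ∂P x :=
    Measurable.lintegral_kernel_prod_right'
      (f := fun p : E × F => (‖g p.2‖₊ : ℝ≥0∞))
      ((hgm.comp measurable_snd).nnnorm.coe_nnreal_ennreal)
  have bind_lint : ∀ f : F → ℝ≥0∞, Measurable f →
      ∫⁻ y, f y ∂nb = ∫⁻ x, ∫⁻ y, f y ∂P x ∂m :=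
    fun f hf => Measure.lintegral_bind P.measurable.aemeasurable hf.aemeasurable
  -- the D-set argument
  have hDm : MeasurableSet {y | nb.rnDeriv ρ y = 0} :=
    Measure.measurable_rnDeriv _ _ (measurableSet_singleton 0)
  have haxD : nb ≪ ρ → ∀ᵐ x ∂m, P x {y | nb.rnDeriv ρ y = 0} = 0 := by
    intro hac
    have hD0 : nb {y | nb.rnDeriv ρ y = 0} = 0 := by
      have hpos := Measure.rnDeriv_pos hac
      have := ae_iff.mp hpos
      refine measure_mono_null (fun y hy => ?_) this
      simp only [Set.mem_setOf_eq] at hy ⊢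
      simp [hy]
    have h0 : ∫⁻ x, P x {y | nb.rnDeriv ρ y = 0} ∂m = 0 := by
      rw [← Measure.bind_apply hDm P.measurable.aemeasurable, ← hnb, hD0]
    exact (lintegral_eq_zero_iff (P.measurable_coe hDm)).mp h0
  -- pointwise key identity
  have hkey : ∀ x, P x ≪ nb → P x ≪ ρ → Integrable (llr (P x) nb) (P x) →
      Integrable (llr (P x) ρ) (P x) → Integrable g (P x) →
      (llr (P x) ρ =ᵐ[P x] fun y => llr (P x) nb y + g y) →
      klDiv (P x) ρ + ∫⁻ y, ENNReal.ofReal (- g y) ∂P x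
        = klDiv (P x) nb + ∫⁻ y, ENNReal.ofReal (g y) ∂P x := by
    intro x hac1 hac2 hint1 hint2 hintg hch
    have h1 : ∫ y, llr (P x) ρ y ∂P x = ∫ y, llr (P x) nb y ∂P x + ∫ y, g y ∂P x := by
      rw [integral_congr_ae hch, integral_add hint1 hintg]
    have hgneg : Integrable (fun y => - g y) (P x) := hintg.neg
    have h2 : ∫ y, g y ∂P x = ∫ y, max (g y) 0 ∂P x - ∫ y, max (- g y) 0 ∂P x := by
      rw [← integral_sub hintg.pos_part hgneg.pos_part]
      refine integral_congr_ae (Filter.Eventually.of_forall fun y => ?_)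
      rcases le_total 0 (g y) with h | h
      · simp [max_eq_left h, max_eq_right (neg_nonpos.mpr h)]
      · simp [max_eq_right h, max_eq_left (neg_nonneg.mpr h)]
    have hn1 : 0 ≤ ∫ y, llr (P x) ρ y ∂P x := integral_llr_nonneg' hac2 hint2
    have hn2 : 0 ≤ ∫ y, llr (P x) nb y ∂P x := integral_llr_nonneg' hac1 hint1
    have hn3 : 0 ≤ ∫ y, max (g y) 0 ∂P x :=
      integral_nonneg fun y => le_max_right _ _
    have hn4 : 0 ≤ ∫ y, max (- g y) 0 ∂P x :=
      integral_nonneg fun y => le_max_right _ _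
    have hlneg : ∫⁻ y, ENNReal.ofReal (- g y) ∂P x
        = ENNReal.ofReal (∫ y, max (- g y) 0 ∂P x) :=
      lintegral_ofReal_eq_ofReal_integral_max hgneg
    rw [klDiv_of_ac hac2 hint2, klDiv_of_ac hac1 hint1,
      lintegral_ofReal_eq_ofReal_integral_max hintg, hlneg,
      ← ENNReal.ofReal_add hn1 hn4, ← ENNReal.ofReal_add hn2 hn3]
    congr 1
    linarith
  -- integrated identity, given the a.e. pointwise identity
  have integrate : (∀ᵐ x ∂m, klDiv (P x) ρ + ∫⁻ y, ENNReal.ofReal (- g y) ∂P x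
        = klDiv (P x) nb + ∫⁻ y, ENNReal.ofReal (g y) ∂P x) →
      ∫⁻ x, klDiv (P x) ρ ∂m + ∫⁻ y, ENNReal.ofReal (- g y) ∂nb
        = ∫⁻ x, klDiv (P x) nb ∂m + ∫⁻ y, ENNReal.ofReal (g y) ∂nb := by
    intro hae
    have hm1 : Measurable fun y => ENNReal.ofReal (- g y) := hgm.neg.ennreal_ofReal
    have hm2 : Measurable fun y => ENNReal.ofReal (g y) := hgm.ennreal_ofReal
    rw [bind_lint _ hm1, bind_lint _ hm2, ← lintegral_add_left mA, ← lintegral_add_left mB]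
    exact lintegral_congr_ae hae
  -- max decomposition helper
  have hmax : ∀ a : ℝ, max a 0 = a + max (- a) 0 := by
    intro a
    rcases le_total 0 a with h | h
    · rw [max_eq_left h, max_eq_right (neg_nonpos.mpr h), add_zero]
    · rw [max_eq_right h, max_eq_left (neg_nonneg.mpr h), add_neg_cancel]
  by_cases hC : klDiv nb ρ = ⊤
  · rw [hC, add_top]
    by_contra hA
    have haeA : ∀ᵐ x ∂m, klDiv (P x) ρ < ⊤ := ae_lt_top mA hA
    have hax : ∀ᵐ x ∂m, P x ≪ ρ ∧ Integrable (llr (P x) ρ) (P x) := by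
      filter_upwards [haeA] with x hx
      by_contra h
      rw [klDiv_eq_top_of_not h] at hx
      exact lt_irrefl _ hx
    have hacnb : nb ≪ ρ := by
      refine Measure.AbsolutelyContinuous.mk fun S hS hS0 => ?_
      rw [hnb, Measure.bind_apply hS P.measurable.aemeasurable]
      have h0 : (fun x => P x S) =ᵐ[m] 0 := by
        filter_upwards [hax] with x hx using hx.1 hS0
      rw [lintegral_congr_ae h0]
      simp
    have hae1 : ∀ᵐ x ∂m, P x ≪ nb := by
      filter_upwards [hax, haxD hacnb] with x hx hxD
      exact ac_of_ac_of_rnDeriv_pos hx.1 hacnb hxD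
    have hbound : ∀ᵐ x ∂m, ∫⁻ y, ENNReal.ofReal (g y) ∂P x ≤ klDiv (P x) ρ + 2 := by
      filter_upwards [hax, hae1] with x hx hx1
      have hch := llr_chain hx1 hacnb
      have hnegint : Integrable (fun y => - llr (P x) ρ y) (P x) := hx.2.neg
      calc ∫⁻ y, ENNReal.ofReal (g y) ∂P x
          = ∫⁻ y, ENNReal.ofReal (llr (P x) ρ y + - llr (P x) nb y) ∂P x := by
            refine lintegral_congr_ae ?_
            filter_upwards [hch] with y hy
            rw [hy]
            congr 1
            ring
        _ ≤ ∫⁻ y, (ENNReal.ofReal (llr (P x) ρ y)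
              + ENNReal.ofReal (- llr (P x) nb y)) ∂P x :=
            lintegral_mono fun y => ENNReal.ofReal_add_le
        _ = ∫⁻ y, ENNReal.ofReal (llr (P x) ρ y) ∂P x
              + ∫⁻ y, ENNReal.ofReal (- llr (P x) nb y) ∂P x :=
            lintegral_add_left (measurable_llr _ _).ennreal_ofReal _
        _ ≤ (klDiv (P x) ρ + 1) + 1 := by
            gcongr
            · -- positive part bounded by klDiv + 1
              have e1 : ∫⁻ y, ENNReal.ofReal (llr (P x) ρ y) ∂P x
                  = ENNReal.ofReal (∫ y, max (llr (P x) ρ y) 0 ∂P x) :=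
                lintegral_ofReal_eq_ofReal_integral_max hx.2
              have e2 : ∫ y, max (llr (P x) ρ y) 0 ∂P x
                  = ∫ y, llr (P x) ρ y ∂P x + ∫ y, max (- llr (P x) ρ y) 0 ∂P x := by
                rw [← integral_add hx.2 hnegint.pos_part]
                exact integral_congr_ae (Filter.Eventually.of_forall fun y => hmax _)
              have e3 : ENNReal.ofReal (∫ y, max (- llr (P x) ρ y) 0 ∂P x)
                  = ∫⁻ y, ENNReal.ofReal (- llr (P x) ρ y) ∂P x :=
                (lintegral_ofReal_eq_ofReal_integral_max hnegint).symm
              rw [e1, e2, klDiv_of_ac hx.1 hx.2]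
              refine le_trans ENNReal.ofReal_add_le ?_
              rw [e3]
              gcongr
              calc ∫⁻ y, ENNReal.ofReal (- llr (P x) ρ y) ∂P x ≤ ρ Set.univ :=
                    lintegral_ofReal_neg_llr_le hx.1
                _ = 1 := measure_univ
            · calc ∫⁻ y, ENNReal.ofReal (- llr (P x) nb y) ∂P x ≤ nb Set.univ :=
                  lintegral_ofReal_neg_llr_le hx1
                _ = 1 := measure_univ
        _ = klDiv (P x) ρ + 2 := by ring
    have hgp_fin : ∫⁻ y, ENNReal.ofReal (g y) ∂nb ≠ ⊤ := by
      rw [bind_lint _ hgm.ennreal_ofReal]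
      refine ne_top_of_le_ne_top ?_ (lintegral_mono_ae hbound)
      rw [lintegral_add_left mA]
      refine ENNReal.add_ne_top.mpr ⟨hA, ?_⟩
      simp
    have hgint : Integrable g nb := by
      refine ⟨hgm.aestronglyMeasurable, ?_⟩
      rw [hasFiniteIntegral_iff_norm]
      have hle : ∫⁻ y, ENNReal.ofReal ‖g y‖ ∂nb
          ≤ ∫⁻ y, (ENNReal.ofReal (g y) + ENNReal.ofReal (- g y)) ∂nb := by
        refine lintegral_mono fun y => ?_
        rcases le_total 0 (g y) with h | h
        · rw [Real.norm_eq_abs, abs_of_nonneg h]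
          exact le_add_right le_rfl
        · rw [Real.norm_eq_abs, abs_of_nonpos h]
          exact le_add_left le_rfl
      rw [lintegral_add_left hgm.ennreal_ofReal] at hle
      refine lt_of_le_of_lt hle (ENNReal.add_lt_top.mpr ⟨?_, ?_⟩)
      · exact lt_of_le_of_ne le_top hgp_fin
      · refine lt_of_le_of_lt (lintegral_ofReal_neg_llr_le hacnb) ?_
        simp
    have hne : klDiv nb ρ ≠ ⊤ := by
      rw [klDiv_of_ac hacnb hgint]
      exact ENNReal.ofReal_ne_top
    exact hne hC
  · have hac_int : nb ≪ ρ ∧ Integrable g nb := by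
      by_contra h
      exact hC (klDiv_eq_top_of_not h)
    obtain ⟨hacnb, hgint⟩ := hac_int
    have hgneg : Integrable (fun y => - g y) nb := hgint.neg
    have habs_fin : ∫⁻ y, (‖g y‖₊ : ℝ≥0∞) ∂nb ≠ ⊤ := hgint.2.ne
    have hgp_fin : ∫⁻ y, ENNReal.ofReal (g y) ∂nb ≠ ⊤ :=
      ne_top_of_le_ne_top habs_fin (lintegral_mono fun y => Real.ofReal_le_enorm _)
    have hgn_fin : ∫⁻ y, ENNReal.ofReal (- g y) ∂nb ≠ ⊤ := by
      refine ne_top_of_le_ne_top habs_fin (lintegral_mono fun y => ?_)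
      calc ENNReal.ofReal (- g y) ≤ (‖- g y‖₊ : ℝ≥0∞) := Real.ofReal_le_enorm _
        _ = (‖g y‖₊ : ℝ≥0∞) := by rw [nnnorm_neg]
    have hgPx : ∀ᵐ x ∂m, Integrable g (P x) := by
      have h1 : ∫⁻ x, ∫⁻ y, (‖g y‖₊ : ℝ≥0∞) ∂P x ∂m ≠ ⊤ := by
        rw [← bind_lint _ hgm.nnnorm.coe_nnreal_ennreal]
        exact habs_fin
      filter_upwards [ae_lt_top mqabs h1] with x hx
      exact ⟨hgm.aestronglyMeasurable, hx⟩
    by_cases hB : ∫⁻ x, klDiv (P x) nb ∂m = ⊤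
    · rw [hB, top_add]
      by_contra hA
      have haeA : ∀ᵐ x ∂m, klDiv (P x) ρ < ⊤ := ae_lt_top mA hA
      have hax : ∀ᵐ x ∂m, P x ≪ ρ ∧ Integrable (llr (P x) ρ) (P x) := by
        filter_upwards [haeA] with x hx
        by_contra h
        rw [klDiv_eq_top_of_not h] at hx
        exact lt_irrefl _ hx
      have hae1 : ∀ᵐ x ∂m, P x ≪ nb := by
        filter_upwards [hax, haxD hacnb] with x hx hxD
        exact ac_of_ac_of_rnDeriv_pos hx.1 hacnb hxD
      have haeK : ∀ᵐ x ∂m, klDiv (P x) ρ + ∫⁻ y, ENNReal.ofReal (- g y) ∂P x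
          = klDiv (P x) nb + ∫⁻ y, ENNReal.ofReal (g y) ∂P x := by
        filter_upwards [hax, hae1, hgPx] with x hx hx1 hx2
        have hch := llr_chain hx1 hacnb
        have hint1 : Integrable (llr (P x) nb) (P x) := by
          have he : llr (P x) nb =ᵐ[P x] fun y => llr (P x) ρ y - g y := by
            filter_upwards [hch] with y hy
            rw [hy]
            ring
          exact (integrable_congr he).mpr (hx.2.sub hx2)
        exact hkey x hx1 hx.1 hint1 hx.2 hx2 hch
      have heq2 := integrate haeK
      rw [hB, top_add] at heq2
      exact (ENNReal.add_ne_top.mpr ⟨hA, hgn_fin⟩) heq2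
    · have haeB : ∀ᵐ x ∂m, klDiv (P x) nb < ⊤ := ae_lt_top mB hB
      have hax' : ∀ᵐ x ∂m, P x ≪ nb ∧ Integrable (llr (P x) nb) (P x) := by
        filter_upwards [haeB] with x hx
        by_contra h
        rw [klDiv_eq_top_of_not h] at hx
        exact lt_irrefl _ hx
      have haeK : ∀ᵐ x ∂m, klDiv (P x) ρ + ∫⁻ y, ENNReal.ofReal (- g y) ∂P x
          = klDiv (P x) nb + ∫⁻ y, ENNReal.ofReal (g y) ∂P x := by
        filter_upwards [hax', hgPx] with x hx hx2
        have hch := llr_chain hx.1 hacnb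
        have hint2 : Integrable (llr (P x) ρ) (P x) :=
          (integrable_congr hch).mpr (hx.2.add hx2)
        exact hkey x hx.1 (hx.1.trans hacnb) hx.2 hint2 hx2 hch
      have heq2 := integrate haeK
      -- compute klDiv nb ρ = gp - gn
      have e1 : ∫⁻ y, ENNReal.ofReal (g y) ∂nb
          = ENNReal.ofReal (∫ y, max (g y) 0 ∂nb) :=
        lintegral_ofReal_eq_ofReal_integral_max hgint
      have e2 : ∫⁻ y, ENNReal.ofReal (- g y) ∂nb
          = ENNReal.ofReal (∫ y, max (- g y) 0 ∂nb) :=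
        lintegral_ofReal_eq_ofReal_integral_max hgneg
      have e3 : ∫ y, g y ∂nb = ∫ y, max (g y) 0 ∂nb - ∫ y, max (- g y) 0 ∂nb := by
        rw [← integral_sub hgint.pos_part hgneg.pos_part]
        refine integral_congr_ae (Filter.Eventually.of_forall fun y => ?_)
        show g y = g y ⊔ 0 - (- g y ⊔ 0)
        have := hmax (g y)
        change g y = max (g y) 0 - max (- g y) 0
        linarith
      have hgnonneg : 0 ≤ ∫ y, g y ∂nb := integral_llr_nonneg' hacnb hgint
      have hCeq : klDiv nb ρ
          = ∫⁻ y, ENNReal.ofReal (g y) ∂nb - ∫⁻ y, ENNReal.ofReal (- g y) ∂nb := by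
        have hq : 0 ≤ ∫ y, max (- g y) 0 ∂nb :=
          integral_nonneg fun y => le_max_right _ _
        rw [klDiv_of_ac hacnb hgint, e1, e2, ← hgdef, e3, ENNReal.ofReal_sub _ hq]
      have hle : ∫⁻ y, ENNReal.ofReal (- g y) ∂nb ≤ ∫⁻ y, ENNReal.ofReal (g y) ∂nb := by
        rw [e1, e2]
        refine ENNReal.ofReal_le_ofReal ?_
        linarith [e3, hgnonneg]
      have hsum : klDiv nb ρ + ∫⁻ y, ENNReal.ofReal (- g y) ∂nb
          = ∫⁻ y, ENNReal.ofReal (g y) ∂nb := by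
        rw [hCeq, tsub_add_cancel_of_le hle]
      have final : ∫⁻ x, klDiv (P x) ρ ∂m + ∫⁻ y, ENNReal.ofReal (- g y) ∂nb
          = (∫⁻ x, klDiv (P x) nb ∂m + klDiv nb ρ) + ∫⁻ y, ENNReal.ofReal (- g y) ∂nb := by
        rw [add_assoc, hsum, heq2]
      exact WithTop.add_right_cancel hgn_fin final
end comp

/-- **Pythagorean decomposition of the conditional KL risk (Corollary C.4).**
`X ∼ μ` on `E`, `X̃` is generated from `X` by the Markov kernel `R : E → Ẽ` (so the
joint law of `(X, X̃)` is `μ ⊗ₘ R`), and `X_t` is generated from `X` by the Markov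
kernel `P : E → F`, conditionally independently of `X̃` given `X`. If `π` is a regular
conditional distribution of `X` given `X̃` (i.e. the swapped joint law disintegrates as
`μ̃ ⊗ₘ π` where `μ̃` is the law of `X̃`), and `P̄ = P ∘ₖ π` is the posterior-predictive
kernel `P̄(x̃) = ∫ P(x) dπ(x|x̃)`, then for every Markov kernel `Q : Ẽ → F`,
`E[KL(P(X) ‖ Q(X̃))] = E[KL(P(X) ‖ P̄(X̃))] + E[KL(P̄(X̃) ‖ Q(X̃))]`;
consequently the infimum over `Q` of the left side equals `E[KL(P(X) ‖ P̄(X̃))]` and is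
attained at `Q = P̄`. -/
theorem conditional_kl_risk_pythagorean
    {E E' F : Type*} [MeasurableSpace E] [StandardBorelSpace E]
    [MeasurableSpace E'] [StandardBorelSpace E']
    [MeasurableSpace F] [StandardBorelSpace F]
    (μ : Measure E) [IsProbabilityMeasure μ]
    (R : Kernel E E') [IsMarkovKernel R]
    (P : Kernel E F) [IsMarkovKernel P]
    (π : Kernel E' E) [IsMarkovKernel π]
    -- `π` is a regular conditional distribution of `X` given `X̃`
    (hπ : (μ ⊗ₘ R).map Prod.swap = ((μ ⊗ₘ R).snd) ⊗ₘ π) :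
    (∀ Q : Kernel E' F, IsMarkovKernel Q →
      ∫⁻ z, klDiv (P z.1) (Q z.2) ∂(μ ⊗ₘ R)
        = (∫⁻ z, klDiv (P z.1) ((P ∘ₖ π) z.2) ∂(μ ⊗ₘ R))
          + ∫⁻ z, klDiv ((P ∘ₖ π) z.2) (Q z.2) ∂(μ ⊗ₘ R))
    ∧ (⨅ (Q : Kernel E' F) (_ : IsMarkovKernel Q),
          ∫⁻ z, klDiv (P z.1) (Q z.2) ∂(μ ⊗ₘ R))
        = ∫⁻ z, klDiv (P z.1) ((P ∘ₖ π) z.2) ∂(μ ⊗ₘ R) := by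
  haveI hcgF : MeasurableSpace.CountablyGenerated F := inferInstance
  haveI h1 : MeasurableSpace.CountableOrCountablyGenerated (E' × E) F :=
    ⟨Or.inr inferInstance⟩
  haveI h2 : MeasurableSpace.CountableOrCountablyGenerated E' F :=
    ⟨Or.inr inferInstance⟩
  haveI h3 : MeasurableSpace.CountableOrCountablyGenerated E F :=
    ⟨Or.inr inferInstance⟩
  set ν := μ ⊗ₘ R with hν
  set μ' := ν.snd with hμ'
  have hswap : ∀ f : E × E' → ℝ≥0∞,
      ∫⁻ z, f z ∂ν = ∫⁻ w, f (w.2, w.1) ∂(μ' ⊗ₘ π) := by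
    intro f
    have h1' : ∫⁻ w, f (w.2, w.1) ∂(ν.map ((MeasurableEquiv.prodComm : E × E' ≃ᵐ E' × E)))
        = ∫⁻ z, f z ∂ν := by
      rw [lintegral_map_equiv]
      rfl
    have h2' : ν.map (⇑((MeasurableEquiv.prodComm : E × E' ≃ᵐ E' × E))) = μ' ⊗ₘ π := by
      have : ⇑((MeasurableEquiv.prodComm : E × E' ≃ᵐ E' × E)) = (Prod.swap : E × E' → E' × E) := rfl
      rw [this]
      exact hπ
    rw [← h1', h2']
  have meas1 : ∀ (T : Kernel E' F), IsMarkovKernel T →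
      Measurable (fun w : E' × E => klDiv (P w.2) (T w.1)) := by
    intro T hT
    have := measurable_klDiv (Kernel.prodMkLeft E' P) (Kernel.prodMkRight E T)
    simpa [Kernel.prodMkLeft_apply, Kernel.prodMkRight_apply] using this
  have hone : ∀ (T : Kernel E' F), IsMarkovKernel T →
      ∫⁻ z, klDiv (P z.1) (T z.2) ∂ν = ∫⁻ b, ∫⁻ x, klDiv (P x) (T b) ∂π b ∂μ' := by
    intro T hT
    rw [hswap (fun z => klDiv (P z.1) (T z.2))]
    exact Measure.lintegral_compProd (meas1 T hT)
  have hthird : ∀ (T : Kernel E' F), IsMarkovKernel T →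
      ∫⁻ z, klDiv ((P ∘ₖ π) z.2) (T z.2) ∂ν
        = ∫⁻ b, klDiv ((P ∘ₖ π) b) (T b) ∂μ' := by
    intro T hT
    have hm : Measurable fun b => klDiv ((P ∘ₖ π) b) (T b) := measurable_klDiv _ _
    have hd : μ' = ν.map Prod.snd := rfl
    rw [hd, lintegral_map hm measurable_snd]
  have key : ∀ Q : Kernel E' F, IsMarkovKernel Q →
      ∫⁻ z, klDiv (P z.1) (Q z.2) ∂ν
        = (∫⁻ z, klDiv (P z.1) ((P ∘ₖ π) z.2) ∂ν)
          + ∫⁻ z, klDiv ((P ∘ₖ π) z.2) (Q z.2) ∂ν := by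
    intro Q hQ
    rw [hone Q hQ, hone (P ∘ₖ π) inferInstance, hthird Q hQ,
      ← lintegral_add_right _ (measurable_klDiv (P ∘ₖ π) Q)]
    refine lintegral_congr fun b => ?_
    have hb : (P ∘ₖ π) b = (π b).bind ⇑P := P.comp_apply π b
    have h := lintegral_klDiv_eq_add (π b) P (Q b)
    rw [← hb] at h
    exact h
  refine ⟨key, le_antisymm ?_ ?_⟩
  · exact iInf_le_of_le (P ∘ₖ π) (iInf_le_of_le inferInstance le_rfl)
  · refine le_iInf fun Q => le_iInf fun hQ => ?_
    rw [key Q hQ]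
    exact le_self_add
end

section
/- Let E and F be measurable spaces, κ_1, …, κ_m Markov kernels from E to E, and η_1, …, η_k Markov kernels from F to F. Lift each κ_i to the kernel on E × F acting as κ_i on the first coordinate and the identity (Dirac) on the second, and each η_j to the kernel acting as η_j on the second coordinate and the identity on the first. Then for every interleaving of the sequence κ_1, …, κ_m with the sequence η_1, …, η_k that preserves the internal order of each sequence, the composition of the lifted kernels along the interleaving is the same kernel on E × F, namely the kernel sending (x, y) to (κ_m ∘ ⋯ ∘ κ_1)(x) ⊗ (η_k ∘ ⋯ ∘ η_1)(y). In particular, the joint law of the endpoints of two independently-noised coordinates depends only on the total amount of noising applied to each coordinate and not on the order in which the coordinatewise noising steps are interleaved. -/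
open MeasureTheory ProbabilityTheory

/-- `IsInterleaving as bs cs` says that `cs` is an interleaving (shuffle) of the two
sequences `as` and `bs`: it merges them into one sequence while preserving the internal
order of each. -/
inductive IsInterleaving {A : Type*} : List A → List A → List A → Prop
  | nil : IsInterleaving ([] : List A) ([] : List A) ([] : List A)
  | left {a : A} {as bs cs : List A} :
      IsInterleaving as bs cs → IsInterleaving (a :: as) bs (a :: cs)
  | right {b : A} {as bs cs : List A} :
      IsInterleaving as bs cs → IsInterleaving as (b :: bs) (b :: cs)

/-- Lift a kernel `κ : E → E` to a kernel on `E × F` acting as `κ` on the first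
coordinate and as the identity (Dirac) on the second: `(x, y) ↦ κ(x) ⊗ δ_y`. -/
noncomputable def liftFst {E F : Type*} [MeasurableSpace E] [MeasurableSpace F]
    (κ : Kernel E E) : Kernel (E × F) (E × F) :=
  (Kernel.prodMkRight F κ) ×ₖ (Kernel.deterministic Prod.snd measurable_snd)

/-- Lift a kernel `η : F → F` to a kernel on `E × F` acting as `η` on the second
coordinate and as the identity (Dirac) on the first: `(x, y) ↦ δ_x ⊗ η(y)`. -/
noncomputable def liftSnd {E F : Type*} [MeasurableSpace E] [MeasurableSpace F]
    (η : Kernel F F) : Kernel (E × F) (E × F) :=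
  (Kernel.deterministic Prod.fst measurable_fst) ×ₖ (Kernel.prodMkLeft E η)

/-- Sequential composition of a list of kernels, in application order: the head of the
list is applied first. -/
noncomputable def compList {X : Type*} [MeasurableSpace X] :
    List (Kernel X X) → Kernel X X
  | [] => Kernel.id
  | k :: ks => compList ks ∘ₖ k

lemma measurable_prod_left {E X Y : Type*} [MeasurableSpace E] [MeasurableSpace X]
    [MeasurableSpace Y] (g : Kernel E X) [IsSFiniteKernel g] (ν : Measure Y) [SFinite ν] :
    Measurable fun x => (g x).prod ν := by
  apply Measure.measurable_of_measurable_coe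
  intro s hs
  simp_rw [Measure.prod_apply hs]
  exact Measurable.lintegral_kernel (measurable_measure_prodMk_left hs)

lemma measurable_prod_right {E X Y : Type*} [MeasurableSpace E] [MeasurableSpace X]
    [MeasurableSpace Y] (μ : Measure X) [SFinite μ] (h : Kernel E Y) [IsSFiniteKernel h] :
    Measurable fun y => μ.prod (h y) := by
  apply Measure.measurable_of_measurable_coe
  intro s hs
  simp_rw [Measure.prod_apply_symm hs]
  exact Measurable.lintegral_kernel (measurable_measure_prodMk_right hs)

lemma bind_prod_left {E X Y : Type*} [MeasurableSpace E] [MeasurableSpace X]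
    [MeasurableSpace Y] (μ : Measure E) (g : Kernel E X) [IsSFiniteKernel g]
    (ν : Measure Y) [SFinite ν] :
    (μ.bind g).prod ν = μ.bind (fun x => (g x).prod ν) := by
  ext s hs
  rw [Measure.prod_apply hs,
    Measure.lintegral_bind g.measurable.aemeasurable (measurable_measure_prodMk_left hs).aemeasurable,
    Measure.bind_apply hs (measurable_prod_left g ν).aemeasurable]
  refine lintegral_congr fun x => ?_
  rw [Measure.prod_apply hs]

lemma bind_prod_right {E X Y : Type*} [MeasurableSpace E] [MeasurableSpace X]
    [MeasurableSpace Y] (μ : Measure X) [SFinite μ] (ν : Measure E) (h : Kernel E Y)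
    [IsSFiniteKernel h] [SFinite (ν.bind h)] :
    μ.prod (ν.bind h) = ν.bind (fun y => μ.prod (h y)) := by
  ext s hs
  rw [Measure.prod_apply_symm hs,
    Measure.lintegral_bind h.measurable.aemeasurable (measurable_measure_prodMk_right hs).aemeasurable,
    Measure.bind_apply hs (measurable_prod_right μ h).aemeasurable]
  refine lintegral_congr fun y => ?_
  rw [Measure.prod_apply_symm hs]

lemma bind_map_aux {α β γ : Type*} [MeasurableSpace α] [MeasurableSpace β] [MeasurableSpace γ]
    (μ : Measure α) {f : α → β} (hf : Measurable f) {g : β → Measure γ} (hg : Measurable g) :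
    (μ.map f).bind g = μ.bind (fun a => g (f a)) := by
  ext s hs
  rw [Measure.bind_apply hs hg.aemeasurable, Measure.bind_apply (f := fun a => g (f a)) hs (hg.comp hf).aemeasurable,
    lintegral_map (f := fun b => g b s) ((Measure.measurable_coe hs).comp hg) hf]

lemma compList_isMarkov {X : Type*} [MeasurableSpace X] (ks : List (Kernel X X))
    (h : ∀ k ∈ ks, IsMarkovKernel k) : IsMarkovKernel (compList ks) := by
  induction ks with
  | nil => rw [compList]; infer_instance
  | cons k ks ih =>
    haveI := h k (List.mem_cons_self)
    haveI := ih fun k hk => h k (List.mem_cons_of_mem _ hk)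
    rw [compList]; infer_instance

/-- **Equivalence of monotonic traversal strategies (Theorem C.1, kernel level).**
Given Markov kernels `κ_1, …, κ_m` on `E` and `η_1, …, η_k` on `F`, lifted to `E × F`
so that each `κ_i` acts only on the first coordinate and each `η_j` only on the second,
the composition of the lifted kernels along *any* interleaving of the two sequences
(preserving each sequence's internal order) is the same kernel on `E × F`, namely
`(x, y) ↦ (κ_m ∘ ⋯ ∘ κ_1)(x) ⊗ (η_k ∘ ⋯ ∘ η_1)(y)`. In particular, the joint law of
the endpoints depends only on the total amount of noising applied to each coordinate,
not on the order of interleaving. -/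
theorem interleaved_coordinatewise_composition_eq
    {E F : Type*} [MeasurableSpace E] [MeasurableSpace F]
    (κs : List (Kernel E E)) (ηs : List (Kernel F F))
    (hκ : ∀ κ ∈ κs, IsMarkovKernel κ) (hη : ∀ η ∈ ηs, IsMarkovKernel η)
    (cs : List (Kernel (E × F) (E × F)))
    (hcs : IsInterleaving (κs.map liftFst) (ηs.map liftSnd) cs) :
    ∀ z : E × F,
      compList cs z = ((compList κs) z.1).prod ((compList ηs) z.2) := by
  have key : ∀ (as bs cs : List (Kernel (E × F) (E × F))), IsInterleaving as bs cs →
      ∀ (κs : List (Kernel E E)) (ηs : List (Kernel F F)),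
        as = κs.map liftFst → bs = ηs.map liftSnd →
        (∀ κ ∈ κs, IsMarkovKernel κ) → (∀ η ∈ ηs, IsMarkovKernel η) →
        ∀ z : E × F, compList cs z = ((compList κs) z.1).prod ((compList ηs) z.2) := by
    intro as bs cs h
    induction h with
    | nil =>
      intro κs ηs ha hb hκ hη z
      obtain rfl : κs = [] := List.map_eq_nil_iff.mp ha.symm
      obtain rfl : ηs = [] := List.map_eq_nil_iff.mp hb.symm
      simp [compList, Kernel.id_apply, Measure.dirac_prod_dirac]
    | @left a as bs cs h ih =>
      intro κs ηs ha hb hκ hη z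
      cases κs with
      | nil => simp at ha
      | cons κ κs' =>
        simp only [List.map_cons, List.cons.injEq] at ha
        obtain ⟨rfl, ha⟩ := ha
        haveI : IsMarkovKernel κ := hκ κ (List.mem_cons_self)
        haveI : IsMarkovKernel (compList κs') :=
          compList_isMarkov _ fun k hk => hκ k (List.mem_cons_of_mem _ hk)
        haveI : IsMarkovKernel (compList ηs) := compList_isMarkov _ hη
        have hlift : liftFst (E := E) (F := F) κ z = ((κ z.1).map fun x => (x, z.2)) := by
          rw [liftFst, Kernel.prod_apply, Kernel.prodMkRight_apply, Kernel.deterministic_apply,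
            Measure.prod_dirac]
        rw [compList, Kernel.comp_apply, hlift,
          bind_map_aux _ (measurable_prodMk_right) (compList cs).measurable]
        have : (fun a : E => compList cs (a, z.2))
            = fun a : E => ((compList κs') a).prod ((compList ηs) z.2) := by
          funext x
          exact ih κs' ηs ha hb (fun k hk => hκ k (List.mem_cons_of_mem _ hk)) hη (x, z.2)
        rw [this, ← bind_prod_left, ← Kernel.comp_apply, ← compList]
    | @right b as bs cs h ih =>
      intro κs ηs ha hb hκ hη z
      cases ηs with
      | nil => simp at hb
      | cons η ηs' =>
        simp only [List.map_cons, List.cons.injEq] at hb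
        obtain ⟨rfl, hb⟩ := hb
        haveI : IsMarkovKernel η := hη η (List.mem_cons_self)
        haveI : IsMarkovKernel (compList ηs') :=
          compList_isMarkov _ fun k hk => hη k (List.mem_cons_of_mem _ hk)
        haveI : IsMarkovKernel (compList κs) := compList_isMarkov _ hκ
        haveI : SFinite ((η z.2).bind (compList ηs')) := by
          rw [← Kernel.comp_apply]; infer_instance
        have hlift : liftSnd (E := E) (F := F) η z = ((η z.2).map (Prod.mk z.1)) := by
          rw [liftSnd, Kernel.prod_apply, Kernel.prodMkLeft_apply, Kernel.deterministic_apply,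
            Measure.dirac_prod]
        rw [compList, Kernel.comp_apply, hlift,
          bind_map_aux _ (measurable_prodMk_left) (compList cs).measurable]
        have : (fun y : F => compList cs (z.1, y))
            = fun y : F => ((compList κs) z.1).prod ((compList ηs') y) := by
          funext y
          exact ih κs ηs' ha hb hκ (fun k hk => hη k (List.mem_cons_of_mem _ hk)) (z.1, y)
        rw [this, ← bind_prod_right, ← Kernel.comp_apply, ← compList]
  exact key _ _ _ hcs κs ηs rfl rfl hκ hη
end
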